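/- Let X and Z be Hermitian matrices in M_n(ℂ) satisfying X² = 1, Z² = 1 and XZ = −ZX. Then for every density matrix ρ ∈ M_n(ℂ) one has (tr(Xρ))² + (tr(Zρ))² ≤ 1. -/

import Mathlib

open Matrix ComplexOrder

private lemma psd_diag_re_nonneg {n : ℕ} {A : Matrix (Fin n) (Fin n) ℂ}
    (hA : A.PosSemidef) (i : Fin n) : 0 ≤ (A i i).re := by
  have h := hA.dotProduct_mulVec_nonneg (Pi.single i 1)
  have hdp : dotProduct (star (Pi.single i 1)) (A *ᵥ (Pi.single i 1 : Fin n → ℂ)) = A i i := by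
    simp [Matrix.mulVec_single, star_eq_iff_star_eq, Pi.single_apply, dotProduct,
      apply_ite, Finset.sum_ite_eq']
  rw [hdp, Complex.nonneg_iff] at h
  exact h.1

private lemma psd_trace_re_nonneg {n : ℕ} {A : Matrix (Fin n) (Fin n) ℂ}
    (hA : A.PosSemidef) : 0 ≤ A.trace.re := by
  rw [Matrix.trace, Complex.re_sum]
  exact Finset.sum_nonneg fun i _ => psd_diag_re_nonneg hA i

private lemma psd_trace_mul_re_nonneg {n : ℕ} {A B : Matrix (Fin n) (Fin n) ℂ}
    (hA : A.PosSemidef) (hB : B.PosSemidef) : 0 ≤ ((A * B).trace).re := by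
  obtain ⟨C, hC⟩ : ∃ C : Matrix (Fin n) (Fin n) ℂ, A = star C * C := by
    open scoped MatrixOrder in exact CStarAlgebra.nonneg_iff_eq_star_mul_self.mp hA.nonneg
  rw [hC, Matrix.mul_assoc, Matrix.trace_mul_comm]
  exact psd_trace_re_nonneg (hB.mul_mul_conjTranspose_same C)

/-- Mixed-state uncertainty relation for anticommuting Hermitian involutions:
for any density matrix `ρ`, `(tr(Xρ))² + (tr(Zρ))² ≤ 1`. -/
theorem mixed_state_uncertainty_anticommuting_involutions {n : ℕ}
    (X Z : Matrix (Fin n) (Fin n) ℂ)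
    (hX : X.IsHermitian) (hZ : Z.IsHermitian)
    (hX2 : X * X = 1) (hZ2 : Z * Z = 1)
    (hanti : X * Z = -(Z * X))
    (ρ : Matrix (Fin n) (Fin n) ℂ) (hρ : ρ.PosSemidef) (hρtr : ρ.trace = 1) :
    ((X * ρ).trace).re ^ 2 + ((Z * ρ).trace).re ^ 2 ≤ 1 := by
  set a : ℝ := ((X * ρ).trace).re with ha
  set b : ℝ := ((Z * ρ).trace).re with hb
  by_cases h0 : a ^ 2 + b ^ 2 = 0
  · rw [h0]; norm_num
  · have hpos : 0 < a ^ 2 + b ^ 2 :=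
      lt_of_le_of_ne (by positivity) (Ne.symm h0)
    set s : ℝ := Real.sqrt (a ^ 2 + b ^ 2) with hs
    have hspos : 0 < s := Real.sqrt_pos.mpr hpos
    have hs2 : s ^ 2 = a ^ 2 + b ^ 2 := Real.sq_sqrt hpos.le
    set α : ℂ := ((a / s : ℝ) : ℂ) with hα
    set β : ℂ := ((b / s : ℝ) : ℂ) with hβ
    have hαβ : α ^ 2 + β ^ 2 = 1 := by
      rw [hα, hβ]
      push_cast
      rw [div_pow, div_pow, ← add_div,
        show ((a:ℂ)^2 + (b:ℂ)^2) = (s:ℂ)^2 by norm_cast; exact hs2.symm]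
      exact div_self (pow_ne_zero _ (Complex.ofReal_ne_zero.mpr hspos.ne'))
    set W : Matrix (Fin n) (Fin n) ℂ := α • X + β • Z with hW
    have hWherm : Wᴴ = W := by
      rw [hW, conjTranspose_add, conjTranspose_smul, conjTranspose_smul, hX.eq, hZ.eq,
        hα, hβ, Complex.star_def, Complex.conj_ofReal, Complex.conj_ofReal]
    have hW2 : W * W = 1 := by
      have expand : W * W = (α*α) • (X*X) + (α*β) • (X*Z) + (β*α) • (Z*X) + (β*β) • (Z*Z) := by
        rw [hW, add_mul, mul_add, mul_add, smul_mul_assoc, smul_mul_assoc, smul_mul_assoc,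
          smul_mul_assoc, mul_smul_comm, mul_smul_comm, mul_smul_comm, mul_smul_comm,
          smul_smul, smul_smul, smul_smul, smul_smul]
        abel
      rw [expand, hX2, hZ2, hanti]
      have hmid : (α*α) • (1 : Matrix (Fin n) (Fin n) ℂ) + (α*β) • (-(Z*X)) + (β*α) • (Z*X)
          + (β*β) • 1 = (α^2+β^2) • 1 := by module
      rw [hmid, hαβ, one_smul]
    -- (1 - W) is "half" of (1-W)ᴴ(1-W)
    have hsq : (1 - W)ᴴ * (1 - W) = (1 - W) + (1 - W) := by
      rw [conjTranspose_sub, conjTranspose_one, hWherm, sub_mul, mul_sub, mul_sub,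
        one_mul, mul_one, hW2]
      noncomm_ring
    have hnn : 0 ≤ (((1 - W)ᴴ * (1 - W) * ρ).trace).re :=
      psd_trace_mul_re_nonneg (Matrix.posSemidef_conjTranspose_mul_self (1 - W)) hρ
    rw [hsq] at hnn
    have htrW : ((W * ρ).trace).re = s := by
      rw [hW, add_mul, smul_mul_assoc, smul_mul_assoc, trace_add, trace_smul, trace_smul]
      rw [Complex.add_re, hα, hβ]
      simp only [smul_eq_mul, Complex.mul_re, Complex.ofReal_re, Complex.ofReal_im,
        zero_mul, sub_zero]
      rw [← ha, ← hb]
      rw [div_mul_eq_mul_div, div_mul_eq_mul_div, ← add_div, ← sq, ← sq, ← hs2, sq,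
        mul_div_assoc, div_self hspos.ne', mul_one]
    have hexp : (((1 - W) + (1 - W)) * ρ).trace.re = 2 * (1 - s) := by
      rw [add_mul, sub_mul, one_mul, trace_add, trace_sub, Complex.add_re, Complex.sub_re,
        hρtr, htrW]
      norm_num
      ring
    rw [hexp] at hnn
    have hs1 : s ≤ 1 := by linarith
    calc a ^ 2 + b ^ 2 = s ^ 2 := hs2.symm
      _ ≤ 1 := by nlinarith
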